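/- arXiv:1003.0169 — 4 statements merged into one kernel-verified Lean document; each statement's English description precedes it below -/
import Mathlib

section
/- Let 𝒞 be an abelian category. For i = 1, 2 let 0 → N_i →^{k_i} X_i →^{p_i} M_i → 0 be a short exact sequence in 𝒞 with extension class a_i ∈ Ext¹(M_i, N_i), and let f : N₁ → N₂ and g : M₁ → M₂ be morphisms. If f_∗ a₁ = g^∗ a₂ in Ext¹(M₁, N₂), then there exists a morphism φ : X₁ → X₂ such that φ ∘ k₁ = k₂ ∘ f and p₂ ∘ φ = g ∘ p₁. (Converse direction of Lemma 3.1.) -/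
open CategoryTheory Abelian

universe w v u

section Helper

variable {C : Type u} [Category.{v} C] {D : Type*} [Category D]
  {F : C ⥤ D} {H : D ⥤ C} (ε : F ⋙ H ≅ 𝟭 C)

/-- Transport a morphism `F.obj X ⟶ F.obj Y` in `D` back to a morphism `X ⟶ Y` in `C`
using a natural isomorphism `F ⋙ H ≅ 𝟭 C`. -/
noncomputable def descendHom {X Y : C} (b : F.obj X ⟶ F.obj Y) : X ⟶ Y :=
  (ε.app X).inv ≫ H.map b ≫ (ε.app Y).hom

lemma descendHom_map_comp {X X' Y : C} (u : X ⟶ X') (b : F.obj X' ⟶ F.obj Y) :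
    descendHom ε (F.map u ≫ b) = u ≫ descendHom ε b := by
  have h₁ := ε.inv.naturality u
  dsimp at h₁
  dsimp [descendHom]
  rw [Functor.map_comp, Category.assoc, ← reassoc_of% h₁]

lemma descendHom_comp_map {X Y Y' : C} (b : F.obj X ⟶ F.obj Y) (v : Y ⟶ Y') :
    descendHom ε (b ≫ F.map v) = descendHom ε b ≫ v := by
  have h₁ := ε.hom.naturality v
  dsimp at h₁
  dsimp [descendHom]
  simp only [Functor.map_comp, Category.assoc, h₁]

lemma descendHom_map {X Y : C} (u : X ⟶ Y) : descendHom ε (F.map u) = u := by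
  have := descendHom_comp_map ε (𝟙 (F.obj X)) u
  rw [Category.id_comp] at this
  rw [this]
  dsimp [descendHom]
  simp

end Helper

/-- The homology in degree `0` of the image in the derived category of a single complex
in degree `0` recovers the original object, naturally. -/
noncomputable def singleCompHomologyIso (C : Type u) [Category.{v} C]
    [CategoryTheory.Abelian C] [HasDerivedCategory C] :
    DerivedCategory.singleFunctor C 0 ⋙ DerivedCategory.homologyFunctor C 0 ≅ 𝟭 C :=
  Functor.isoWhiskerRight ((SingleFunctors.evaluation _ _ 0).mapIso
      (DerivedCategory.singleFunctorsPostcompQIso C)) (DerivedCategory.homologyFunctor C 0) ≪≫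
    Functor.associator _ _ _ ≪≫
    Functor.isoWhiskerLeft (CochainComplex.singleFunctor C 0)
      (DerivedCategory.homologyFunctorFactors C 0) ≪≫
    HomologicalComplex.homologyFunctorSingleIso C (ComplexShape.up ℤ) 0

/-- Converse direction of Lemma 3.1: if `f⁎ a₁ = g⁎ a₂` in `Ext¹(M₁, N₂)`, then there
is a morphism of short exact sequences extending `f : N₁ ⟶ N₂` and `g : M₁ ⟶ M₂`. -/
theorem exists_hom_of_pushforward_eq_pullback
    {C : Type u} [Category.{v} C] [CategoryTheory.Abelian C] [HasExt.{w} C]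
    (S₁ S₂ : ShortComplex C) (hS₁ : S₁.ShortExact) (hS₂ : S₂.ShortExact)
    (f : S₁.X₁ ⟶ S₂.X₁) (g : S₁.X₃ ⟶ S₂.X₃)
    (h : hS₁.extClass.comp (Ext.mk₀ f) (add_zero 1) =
      (Ext.mk₀ g).comp hS₂.extClass (zero_add 1)) :
    ∃ φ : S₁.X₂ ⟶ S₂.X₂, S₁.f ≫ φ = f ≫ S₂.f ∧ φ ≫ S₂.g = S₁.g ≫ g := by
  letI := HasDerivedCategory.standard C
  -- the commutative square between the connecting morphisms in the derived category
  have comm : hS₁.singleδ ≫ ((DerivedCategory.singleFunctor C 0).map f)⟦(1 : ℤ)⟧' =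
      (DerivedCategory.singleFunctor C 0).map g ≫ hS₂.singleδ := by
    have e₁ := Ext.hom_comp_singleFunctor_map_shift (C := C) hS₁.extClass f
    have e₂ := Ext.singleFunctor_map_comp_hom (C := C) g hS₂.extClass
    have hh := congrArg Ext.hom h
    rw [← e₁, ← e₂, hS₁.extClass_hom, hS₂.extClass_hom] at hh
    exact hh
  -- complete to a morphism of distinguished triangles
  obtain ⟨b, hb₁, hb₂⟩ := Pretriangulated.complete_distinguished_triangle_morphism₂
    hS₁.singleTriangle hS₂.singleTriangle hS₁.singleTriangle_distinguished
    hS₂.singleTriangle_distinguished ((DerivedCategory.singleFunctor C 0).map f)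
    ((DerivedCategory.singleFunctor C 0).map g) comm
  -- descend the middle morphism to `C` using the homology functor
  refine ⟨descendHom (singleCompHomologyIso C) b, ?_, ?_⟩
  · rw [← descendHom_map (singleCompHomologyIso C) (f ≫ S₂.f), Functor.map_comp,
      ← descendHom_map_comp (singleCompHomologyIso C) S₁.f b]
    exact congrArg (descendHom (singleCompHomologyIso C)) hb₁
  · rw [← descendHom_map (singleCompHomologyIso C) (S₁.g ≫ g), Functor.map_comp,
      ← descendHom_comp_map (singleCompHomologyIso C) b S₂.g]
    exact congrArg (descendHom (singleCompHomologyIso C)) hb₂.symm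
end

section
/- Let V be an inner product space over ℂ and let u, w ∈ V be linearly independent vectors with ⟪u, u⟫ = ⟪w, w⟫ = 2. If the composite σ_u ∘ σ_w of the associated complex reflections has finite order exactly m, where m ∈ {2, 3, 4, 6}, then |⟪u, w⟫| = 2·cos(π/m). (Claim from the proof of Lemma 3.7.) -/
open scoped InnerProductSpace

/-- The complex reflection associated to a vector `u` with `⟪u, u⟫ = 2`:
`σ_u (v) = v - ⟪u, v⟫ • u`. -/
noncomputable def complexReflection {V : Type*} [NormedAddCommGroup V]
    [InnerProductSpace ℂ V] (u : V) : Module.End ℂ V where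
  toFun v := v - (⟪u, v⟫_ℂ) • u
  map_add' x y := by
    simp only [inner_add_right, add_smul]
    abel
  map_smul' c x := by
    simp only [inner_smul_right, RingHom.id_apply, smul_sub, smul_smul]

open ComplexConjugate

/-- Claim from the proof of Lemma 3.7: if `u, w` are linearly independent with
`⟪u, u⟫ = ⟪w, w⟫ = 2` and `σ_u ∘ σ_w` has finite order exactly `m ∈ {2, 3, 4, 6}`,
then `|⟪u, w⟫| = 2 cos (π / m)`. -/
theorem abs_inner_eq_two_cos_of_orderOf
    {V : Type*} [NormedAddCommGroup V] [InnerProductSpace ℂ V] (u w : V)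
    (hind : LinearIndependent ℂ ![u, w]) (hu : ⟪u, u⟫_ℂ = 2) (hw : ⟪w, w⟫_ℂ = 2)
    (m : ℕ) (hm : m ∈ ({2, 3, 4, 6} : Set ℕ))
    (hord : orderOf (complexReflection u * complexReflection w) = m) :
    ‖⟪u, w⟫_ℂ‖ = 2 * Real.cos (Real.pi / m) := by
  set T := complexReflection u * complexReflection w with hT_def
  set a := ⟪u, w⟫_ℂ with ha_def
  have hwu : ⟪w, u⟫_ℂ = conj a := by rw [ha_def]; exact (inner_conj_symm w u).symm
  -- the action of T on a general vector
  have happ : ∀ v : V, T v = v - ⟪u, v⟫_ℂ • u - ⟪w, v⟫_ℂ • w + (⟪w, v⟫_ℂ * a) • u := by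
    intro v
    show complexReflection u (complexReflection w v) = _
    show (complexReflection w v) - ⟪u, complexReflection w v⟫_ℂ • u = _
    show (v - ⟪w, v⟫_ℂ • w) - ⟪u, v - ⟪w, v⟫_ℂ • w⟫_ℂ • u = _
    rw [inner_sub_right, inner_smul_right, ← ha_def]
    module
  have hTu : T u = ((conj a) * a - 1) • u - (conj a) • w := by
    rw [happ u, hu, hwu]
    module
  have hTw : T w = a • u + (-1 : ℂ) • w := by
    rw [happ w, hw, ha_def]
    module
  have hrec : ∀ p q : ℂ, T (p • u + q • w)
      = (p * ((conj a) * a - 1) + q * a) • u + (-(p * (conj a)) - q) • w := by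
    intro p q
    rw [map_add, map_smul, map_smul, hTu, hTw]
    module
  have h1 : T (w) = (a) • u + ((-1 : ℂ)) • w := by
    rw [hTw]
  have h2 : T (T (w)) = (a^2*(conj a) - 2*a) • u + (1 - a*(conj a)) • w := by
    rw [h1, hrec]
    module
  have h3 : T (T (T (w))) = (a^3*(conj a)^2 - 4*a^2*(conj a) + 3*a) • u + (-(a^2*(conj a)^2) + 3*(a*(conj a)) - 1) • w := by
    rw [h2, hrec]
    module
  have h4 : T (T (T (T (w)))) = (a^4*(conj a)^3 - 6*a^3*(conj a)^2 + 10*a^2*(conj a) - 4*a) • u + (-(a^3*(conj a)^3) + 5*(a^2*(conj a)^2) - 6*(a*(conj a)) + 1) • w := by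
    rw [h3, hrec]
    module
  have h5 : T (T (T (T (T (w))))) = (a^5*(conj a)^4 - 8*a^4*(conj a)^3 + 21*a^3*(conj a)^2 - 20*a^2*(conj a) + 5*a) • u + (-(a^4*(conj a)^4) + 7*(a^3*(conj a)^3) - 15*(a^2*(conj a)^2) + 10*(a*(conj a)) - 1) • w := by
    rw [h4, hrec]
    module
  have h6 : T (T (T (T (T (T (w)))))) = (a^6*(conj a)^5 - 10*a^5*(conj a)^4 + 36*a^4*(conj a)^3 - 56*a^3*(conj a)^2 + 35*a^2*(conj a) - 6*a) • u + (-(a^5*(conj a)^5) + 9*(a^4*(conj a)^4) - 28*(a^3*(conj a)^3) + 35*(a^2*(conj a)^2) - 15*(a*(conj a)) + 1) • w := by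
    rw [h5, hrec]
    module
  -- if the inner product is zero, T squares to the identity
  have hT2 : a * conj a = 0 → T ^ 2 = 1 := by
    intro hr0
    have hns : Complex.normSq a = 0 := by
      have : (Complex.normSq a : ℂ) = 0 := by rw [← Complex.mul_conj]; linear_combination hr0
      exact_mod_cast this
    have ha0 : a = 0 := Complex.normSq_eq_zero.mp hns
    have haa : ⟪u, w⟫_ℂ = 0 := by rw [← ha_def, ha0]
    have hwu0 : ⟪w, u⟫_ℂ = 0 := by rw [hwu, ha0, map_zero]
    apply LinearMap.ext
    intro v
    rw [show T ^ 2 = T * T from by rw [pow_two], Module.End.mul_apply, happ v, happ _,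
      Module.End.one_apply]
    simp only [inner_sub_right, inner_add_right, inner_smul_right, hu, hw, haa, hwu0, ha0,
      mul_zero, zero_mul, zero_smul, add_zero, sub_zero]
    module
  -- if ⟪u,w⟫ conj ⟪u,w⟫ = 1, T cubes to the identity
  have hT3 : a * conj a - 1 = 0 → T ^ 3 = 1 := by
    intro hr1
    have hs : ∀ p q : ℂ, T (T (p • u + q • w)) + T (p • u + q • w) + (p • u + q • w) = 0 := by
      intro p q
      rw [hrec, hrec]
      match_scalars
      · linear_combination (p * (a * conj a - 1) + q * a) * hr1
      · linear_combination (-(p * conj a) - q) * hr1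
    have hD : ∀ v : V, T v - v = (⟪w, v⟫_ℂ * a - ⟪u, v⟫_ℂ) • u + (-⟪w, v⟫_ℂ) • w := by
      intro v
      rw [happ v]
      module
    have h3v : ∀ v : V, T (T (T v)) = v := by
      intro v
      have h := hs (⟪w, v⟫_ℂ * a - ⟪u, v⟫_ℂ) (-⟪w, v⟫_ℂ)
      rw [← hD v, map_sub, map_sub] at h
      have h' : T (T (T v)) - v = 0 := by rw [← h]; abel
      exact sub_eq_zero.mp h'
    apply LinearMap.ext
    intro v
    rw [show T ^ 3 = T * T * T from by rw [pow_succ, pow_two], Module.End.mul_apply,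
      Module.End.mul_apply, Module.End.one_apply]
    exact h3v v
  have hpair : ∀ p q : ℂ, p • u + q • w = 0 → p = 0 ∧ q = 0 := fun p q h =>
    hind.eq_zero_of_pair h
  -- helper to convert a * conj a = r into |a| = sqrt r
  have habs : ∀ r : ℝ, a * conj a - (r : ℂ) = 0 → ‖a‖ = Real.sqrt r := by
    intro r hr
    have : (Complex.normSq a : ℂ) = (r : ℂ) := by
      rw [← Complex.mul_conj]; linear_combination hr
    have hns : Complex.normSq a = r := by exact_mod_cast this
    rw [Complex.norm_def, hns]
  simp only [Set.mem_insert_iff, Set.mem_singleton_iff] at hm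
  rcases hm with rfl | rfl | rfl | rfl
  · -- m = 2
    have hTm : T ^ 2 = 1 := by rw [← hord]; exact pow_orderOf_eq_one T
    have key := LinearMap.congr_fun hTm w
    rw [pow_two] at key
    simp only [Module.End.mul_apply, Module.End.one_apply] at key
    rw [h2] at key
    have h0 : (a^2*(conj a) - 2*a) • u + ((1 - a*(conj a)) - 1) • w = 0 := by
      rw [show (a^2*(conj a) - 2*a) • u + ((1 - a*(conj a)) - 1) • w = ((a^2*(conj a) - 2*a) • u + (1 - a*(conj a)) • w) - w from by module, key, sub_self]
    obtain ⟨hp, hq⟩ := hpair _ _ h0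
    have hr0 : a * conj a = 0 := by linear_combination -hq
    rw [habs 0 (by push_cast; linear_combination hr0), Real.sqrt_zero,
      show ((2 : ℕ) : ℝ) = 2 by norm_num, Real.cos_pi_div_two]
    ring
  · -- m = 3
    have hTm : T ^ 3 = 1 := by rw [← hord]; exact pow_orderOf_eq_one T
    have key := LinearMap.congr_fun hTm w
    rw [show T ^ 3 = T ^ 2 * T from pow_succ T 2, pow_two] at key
    simp only [Module.End.mul_apply, Module.End.one_apply] at key
    rw [h3] at key
    have h0 : (a^3*(conj a)^2 - 4*a^2*(conj a) + 3*a) • u + ((-(a^2*(conj a)^2) + 3*(a*(conj a)) - 1) - 1) • w = 0 := by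
      rw [show (a^3*(conj a)^2 - 4*a^2*(conj a) + 3*a) • u + ((-(a^2*(conj a)^2) + 3*(a*(conj a)) - 1) - 1) • w = ((a^3*(conj a)^2 - 4*a^2*(conj a) + 3*a) • u + (-(a^2*(conj a)^2) + 3*(a*(conj a)) - 1) • w) - w from by module, key, sub_self]
    obtain ⟨hp, hq⟩ := hpair _ _ h0
    have hfac : (a * conj a - 1) * (a * conj a - 2) = 0 := by linear_combination -hq
    rcases mul_eq_zero.mp hfac with hr1 | hr2
    · rw [habs 1 (by push_cast; linear_combination hr1), Real.sqrt_one, show ((3 : ℕ) : ℝ) = 3 by norm_num,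
        Real.cos_pi_div_three]
      ring
    · exfalso
      have ha0 : a = 0 := by
        linear_combination -hp + a * (a * conj a - 2) * hr2
      rw [ha0] at hr2
      simp at hr2
  · -- m = 4
    have hTm : T ^ 4 = 1 := by rw [← hord]; exact pow_orderOf_eq_one T
    have key := LinearMap.congr_fun hTm w
    rw [show T ^ 4 = T ^ 3 * T from pow_succ T 3, show T ^ 3 = T ^ 2 * T from pow_succ T 2, pow_two] at key
    simp only [Module.End.mul_apply, Module.End.one_apply] at key
    rw [h4] at key
    have h0 : (a^4*(conj a)^3 - 6*a^3*(conj a)^2 + 10*a^2*(conj a) - 4*a) • u + ((-(a^3*(conj a)^3) + 5*(a^2*(conj a)^2) - 6*(a*(conj a)) + 1) - 1) • w = 0 := by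
      rw [show (a^4*(conj a)^3 - 6*a^3*(conj a)^2 + 10*a^2*(conj a) - 4*a) • u + ((-(a^3*(conj a)^3) + 5*(a^2*(conj a)^2) - 6*(a*(conj a)) + 1) - 1) • w = ((a^4*(conj a)^3 - 6*a^3*(conj a)^2 + 10*a^2*(conj a) - 4*a) • u + (-(a^3*(conj a)^3) + 5*(a^2*(conj a)^2) - 6*(a*(conj a)) + 1) • w) - w from by module, key, sub_self]
    obtain ⟨hp, hq⟩ := hpair _ _ h0
    have hfac : (a * conj a) * (a * conj a - 2) * (a * conj a - 3) = 0 := by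
      linear_combination -hq
    rcases mul_eq_zero.mp hfac with h' | hr3
    · rcases mul_eq_zero.mp h' with hr0 | hr2
      · exfalso
        have hd := orderOf_dvd_of_pow_eq_one (hT2 hr0)
        rw [hord] at hd
        omega
      · rw [habs 2 (by push_cast; linear_combination hr2), show ((4 : ℕ) : ℝ) = 4 by norm_num, Real.cos_pi_div_four]
        ring
    · exfalso
      have ha0 : a = 0 := by
        linear_combination -hp + a * ((a * conj a) ^ 2 - 3 * (a * conj a) + 1) * hr3
      rw [ha0] at hr3
      simp at hr3
  · -- m = 6
    have hTm : T ^ 6 = 1 := by rw [← hord]; exact pow_orderOf_eq_one T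
    have key := LinearMap.congr_fun hTm w
    rw [show T ^ 6 = T ^ 5 * T from pow_succ T 5, show T ^ 5 = T ^ 4 * T from pow_succ T 4, show T ^ 4 = T ^ 3 * T from pow_succ T 3, show T ^ 3 = T ^ 2 * T from pow_succ T 2, pow_two] at key
    simp only [Module.End.mul_apply, Module.End.one_apply] at key
    rw [h6] at key
    have h0 : (a^6*(conj a)^5 - 10*a^5*(conj a)^4 + 36*a^4*(conj a)^3 - 56*a^3*(conj a)^2 + 35*a^2*(conj a) - 6*a) • u + ((-(a^5*(conj a)^5) + 9*(a^4*(conj a)^4) - 28*(a^3*(conj a)^3) + 35*(a^2*(conj a)^2) - 15*(a*(conj a)) + 1) - 1) • w = 0 := by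
      rw [show (a^6*(conj a)^5 - 10*a^5*(conj a)^4 + 36*a^4*(conj a)^3 - 56*a^3*(conj a)^2 + 35*a^2*(conj a) - 6*a) • u + ((-(a^5*(conj a)^5) + 9*(a^4*(conj a)^4) - 28*(a^3*(conj a)^3) + 35*(a^2*(conj a)^2) - 15*(a*(conj a)) + 1) - 1) • w = ((a^6*(conj a)^5 - 10*a^5*(conj a)^4 + 36*a^4*(conj a)^3 - 56*a^3*(conj a)^2 + 35*a^2*(conj a) - 6*a) • u + (-(a^5*(conj a)^5) + 9*(a^4*(conj a)^4) - 28*(a^3*(conj a)^3) + 35*(a^2*(conj a)^2) - 15*(a*(conj a)) + 1) • w) - w from by module, key, sub_self]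
    obtain ⟨hp, hq⟩ := hpair _ _ h0
    have hfac : (a * conj a) * (a * conj a - 1) * (a * conj a - 3)
        * ((a * conj a) ^ 2 - 5 * (a * conj a) + 5) = 0 := by
      linear_combination -hq
    rcases mul_eq_zero.mp hfac with h' | hr5
    · rcases mul_eq_zero.mp h' with h'' | hr3
      · rcases mul_eq_zero.mp h'' with hr0 | hr1
        · exfalso
          have hd := orderOf_dvd_of_pow_eq_one (hT2 hr0)
          rw [hord] at hd
          omega
        · exfalso
          have hd := orderOf_dvd_of_pow_eq_one (hT3 hr1)
          rw [hord] at hd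
          omega
      · rw [habs 3 (by push_cast; linear_combination hr3), show ((6 : ℕ) : ℝ) = 6 by norm_num, Real.cos_pi_div_six]
        ring
    · exfalso
      have ha0 : a = 0 := by
        linear_combination -hp
          + a * ((a * conj a) ^ 3 - 5 * (a * conj a) ^ 2 + 6 * (a * conj a) - 1) * hr5
      rw [ha0] at hr5
      simp at hr5
end

section
/- Let ι be a finite set and G a simple graph on ι that is acyclic (a forest). Let A : ι → ι → ℂ satisfy A i j = conj(A j i) for all i, j (Hermitian symmetry) and A i j = 0 whenever i ≠ j and i, j are not adjacent in G. Then there exists c : ι → ℂ with |c i| = 1 for all i such that c i · conj(c j) · A i j = |A i j| for all i ≠ j. (Rescaling claim from the proof of Lemma 3.7, using that the Coxeter graph of a Weyl group is a forest: the vectors v''_s can be multiplied by unit scalars so that all pairings ⟨v'_s, v'_{s'}⟩ become the nonnegative real numbers 2cos(π/m'_{s,s'}).) -/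
open scoped ComplexConjugate

open SimpleGraph

/-- The unit phase of a complex number (`1` if the number is `0`). -/
noncomputable def phaseAux (z : ℂ) : ℂ := if z = 0 then 1 else z / (‖z‖ : ℂ)

lemma abs_phaseAux (z : ℂ) : ‖phaseAux z‖ = 1 := by
  unfold phaseAux
  split_ifs with h
  · simp
  · rw [norm_div, Complex.norm_real, norm_norm, div_self (norm_ne_zero_iff.mpr h)]

lemma phaseAux_conj (z : ℂ) : phaseAux (conj z) = conj (phaseAux z) := by
  unfold phaseAux
  by_cases h : z = 0
  · simp [h]
  · rw [if_neg h, if_neg (fun hc => h ((map_eq_zero _).mp hc)), map_div₀, Complex.norm_conj,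
      Complex.conj_ofReal]

/-- Product of phases of `A` along the darts of a walk. -/
noncomputable def walkProd {V : Type*} {G : SimpleGraph V} (A : V → V → ℂ) {u v : V}
    (w : G.Walk u v) : ℂ :=
  (w.darts.map (fun d => phaseAux (A d.fst d.snd))).prod

lemma abs_walkProd {V : Type*} {G : SimpleGraph V} (A : V → V → ℂ) {u v : V}
    (w : G.Walk u v) : ‖walkProd A w‖ = 1 := by
  unfold walkProd
  rw [List.norm_prod]
  refine List.prod_eq_one ?_
  intro x hx
  simp only [List.map_map, List.mem_map] at hx
  obtain ⟨d, _, rfl⟩ := hx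
  exact abs_phaseAux _

lemma walkProd_append {V : Type*} {G : SimpleGraph V} (A : V → V → ℂ) {u v w : V}
    (p : G.Walk u v) (q : G.Walk v w) :
    walkProd A (p.append q) = walkProd A p * walkProd A q := by
  unfold walkProd
  rw [SimpleGraph.Walk.darts_append, List.map_append, List.prod_append]

lemma walkProd_concat {V : Type*} {G : SimpleGraph V} (A : V → V → ℂ) {u v w : V}
    (p : G.Walk u v) (h : G.Adj v w) :
    walkProd A (p.concat h) = walkProd A p * phaseAux (A v w) := by
  unfold walkProd
  rw [SimpleGraph.Walk.darts_concat, List.map_concat, List.prod_concat]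

lemma walkProd_copy {V : Type*} {G : SimpleGraph V} (A : V → V → ℂ) {u v u' v' : V}
    (p : G.Walk u v) (hu : u = u') (hv : v = v') :
    walkProd A (p.copy hu hv) = walkProd A p := by
  subst hu hv; rfl

/-- Rescaling claim from the proof of Lemma 3.7: if `G` is an acyclic simple graph
(a forest) on a finite set `ι`, and `A : ι → ι → ℂ` is Hermitian and vanishes off the
diagonal on non-adjacent pairs, then there are unit scalars `c i` with
`c i * conj (c j) * A i j = |A i j|` for all `i ≠ j`. -/
theorem exists_unit_rescaling_of_forest
    {ι : Type*} [Fintype ι] (G : SimpleGraph ι) (hG : G.IsAcyclic)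
    (A : ι → ι → ℂ) (herm : ∀ i j, A i j = conj (A j i))
    (hzero : ∀ i j, i ≠ j → ¬ G.Adj i j → A i j = 0) :
    ∃ c : ι → ℂ, (∀ i, ‖c i‖ = 1) ∧
      ∀ i j, i ≠ j → c i * conj (c j) * A i j = ((‖A i j‖ : ℝ) : ℂ) := by
  classical
  -- root of each connected component
  set root : ι → ι := fun i => (G.connectedComponentMk i).out with hroot_def
  have hreach : ∀ i, G.Reachable (root i) i := by
    intro i
    exact (SimpleGraph.ConnectedComponent.eq.mp ((G.connectedComponentMk i).out_eq))
  have hroot_adj : ∀ i j, G.Adj i j → root i = root j := by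
    intro i j h
    simp only [hroot_def]
    rw [SimpleGraph.ConnectedComponent.eq.mpr h.reachable]
  -- choose a path from the root to each vertex
  let p : ∀ i, G.Path (root i) i := fun i => (hreach i).some.toPath
  let c : ι → ℂ := fun i => walkProd A (p i : G.Walk (root i) i)
  -- key comparison for two paths with the same start and adjacent endpoints
  have key : ∀ (u i j : ι) (q : G.Walk u i) (_ : q.IsPath) (w : G.Walk u j) (_ : w.IsPath)
      (hij : G.Adj i j),
      walkProd A q * phaseAux (A i j) = walkProd A w ∨
        walkProd A w * phaseAux (A j i) = walkProd A q := by
    intro u i j q hq w hw hij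
    by_cases hj : j ∈ q.support
    · right
      have hsplit := q.take_spec hj
      have h1 : (q.takeUntil j hj).IsPath := hq.takeUntil hj
      have h2 : (q.dropUntil j hj).IsPath := hq.dropUntil hj
      have e1 : (⟨q.takeUntil j hj, h1⟩ : G.Path u j) = ⟨w, hw⟩ := hG.path_unique _ _
      have hedge : (SimpleGraph.Walk.cons hij.symm SimpleGraph.Walk.nil : G.Walk j i).IsPath := by
        simp [SimpleGraph.Walk.cons_isPath_iff, hij.ne']
      have e2 : (⟨q.dropUntil j hj, h2⟩ : G.Path j i)
          = ⟨SimpleGraph.Walk.cons hij.symm SimpleGraph.Walk.nil, hedge⟩ := hG.path_unique _ _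
      have e1' : q.takeUntil j hj = w := congrArg Subtype.val e1
      have e2' : q.dropUntil j hj = SimpleGraph.Walk.cons hij.symm SimpleGraph.Walk.nil :=
        congrArg Subtype.val e2
      calc walkProd A w * phaseAux (A j i)
          = walkProd A (q.takeUntil j hj) * walkProd A (q.dropUntil j hj) := by
            rw [e1', e2']
            congr 1
            unfold walkProd
            simp
        _ = walkProd A ((q.takeUntil j hj).append (q.dropUntil j hj)) :=
            (walkProd_append A _ _).symm
        _ = walkProd A q := by rw [hsplit]
    · left
      have hcp : (q.concat hij).IsPath := by
        rw [SimpleGraph.Walk.concat_eq_append]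
        rw [SimpleGraph.Walk.isPath_def, SimpleGraph.Walk.support_append]
        simp only [SimpleGraph.Walk.support_cons, SimpleGraph.Walk.support_nil]
        rw [List.nodup_append]
        refine ⟨hq.support_nodup, by simp, ?_⟩
        intro a ha
        simp only [List.tail_cons, List.mem_singleton]
        rintro _ rfl rfl
        exact hj ha
      have e : (⟨q.concat hij, hcp⟩ : G.Path u j) = ⟨w, hw⟩ := hG.path_unique _ _
      have e' : q.concat hij = w := congrArg Subtype.val e
      rw [← e', walkProd_concat]
  have habs : ∀ i, ‖c i‖ = 1 := fun i => abs_walkProd A _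
  refine ⟨c, habs, ?_⟩
  intro i j hne
  by_cases hadj : G.Adj i j
  · -- compare the two root paths
    have hr : root i = root j := hroot_adj i j hadj
    have hw : ((p j : G.Walk (root j) j).copy hr.symm rfl).IsPath := by
      rw [SimpleGraph.Walk.isPath_copy]
      exact (p j).2
    have hkey := key (root i) i j (p i : G.Walk (root i) i) (p i).2
      ((p j : G.Walk (root j) j).copy hr.symm rfl) hw hadj
    rw [walkProd_copy] at hkey
    have hcc : c j * conj (c j) = 1 := by
      rw [Complex.mul_conj]
      norm_cast
      rw [← Complex.sq_norm, habs j, one_pow]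
    have hphase : c i * conj (c j) = conj (phaseAux (A i j)) := by
      rcases hkey with h | h
      · -- c i * phaseAux (A i j) = c j
        have h : c i * phaseAux (A i j) = c j := h
        have : c i = c j * conj (phaseAux (A i j)) := by
          have h1 : phaseAux (A i j) * conj (phaseAux (A i j)) = 1 := by
            rw [Complex.mul_conj]
            norm_cast
            rw [← Complex.sq_norm, abs_phaseAux, one_pow]
          calc c i = c i * (phaseAux (A i j) * conj (phaseAux (A i j))) := by rw [h1, mul_one]
            _ = (c i * phaseAux (A i j)) * conj (phaseAux (A i j)) := by ring
            _ = c j * conj (phaseAux (A i j)) := by rw [h]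
        rw [this]
        calc c j * conj (phaseAux (A i j)) * conj (c j)
            = (c j * conj (c j)) * conj (phaseAux (A i j)) := by ring
          _ = conj (phaseAux (A i j)) := by rw [hcc, one_mul]
      · -- c j * phaseAux (A j i) = c i
        have h : c j * phaseAux (A j i) = c i := h
        have hAij : phaseAux (A j i) = conj (phaseAux (A i j)) := by
          rw [herm j i, phaseAux_conj]
        rw [← h, hAij]
        calc c j * conj (phaseAux (A i j)) * conj (c j)
            = (c j * conj (c j)) * conj (phaseAux (A i j)) := by ring
          _ = conj (phaseAux (A i j)) := by rw [hcc, one_mul]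
    rw [hphase]
    by_cases hz : A i j = 0
    · simp [hz]
    · unfold phaseAux
      rw [if_neg hz, map_div₀, Complex.conj_ofReal, div_mul_eq_mul_div, mul_comm,
        Complex.mul_conj]
      rw [Complex.normSq_eq_norm_sq]
      push_cast
      rw [pow_two, mul_div_assoc, div_self (by exact_mod_cast norm_ne_zero_iff.mpr hz), mul_one]
  · have hz : A i j = 0 := hzero i j hne hadj
    simp [hz]
end

section
/- Let V be an inner product space over ℂ, S a finite set, and (v_s)_{s∈S} a family of vectors with ⟪v_s, v_s⟫ = 2 for all s, such that v_s and v_{s'} are linearly independent for s ≠ s'. For s ≠ s' let m(s, s') denote the order of the composite σ_{v_s} ∘ σ_{v_{s'}} of the associated complex reflections, and assume m(s, s') ∈ {2, 3, 4, 6} for all s ≠ s'. Assume moreover that the simple graph on S with an edge {s, s'} exactly when m(s, s') > 2 is acyclic (a forest). Then there exist scalars c : S → ℂ with |c_s| = 1 for all s, such that ⟪c_s v_s, c_{s'} v_{s'}⟫ = 2·cos(π/m(s, s')) for all s ≠ s'. (Abstract form of Lemma 3.7.) -/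
open scoped InnerProductSpace

section PartA

variable {V : Type*} [NormedAddCommGroup V] [InnerProductSpace ℂ V]

lemma complexReflection_apply (u x : V) :
    complexReflection u x = x - (⟪u, x⟫_ℂ) • u := rfl

lemma partA {u w : V} (hu : ⟪u, u⟫_ℂ = 2) (hw : ⟪w, w⟫_ℂ = 2)
    (hind : LinearIndependent ℂ ![u, w]) {n : ℕ}
    (hn : n ∈ ({2, 3, 4, 6} : Set ℕ))
    (hord : orderOf (complexReflection u * complexReflection w) = n) :
    ‖⟪u, w⟫_ℂ‖ = 2 * Real.cos (Real.pi / n) := by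
  set T := complexReflection u * complexReflection w with hTdef
  set a := ⟪u, w⟫_ℂ with hadef
  set b := ⟪w, u⟫_ℂ with hbdef
  have hba : b = (starRingEnd ℂ) a := by rw [hbdef, hadef, ← inner_conj_symm]
  have hTapp : ∀ x : V, T x = x - (⟪u, x⟫_ℂ - ⟪w, x⟫_ℂ * a) • u - ⟪w, x⟫_ℂ • w := by
    intro x
    show complexReflection u (complexReflection w x) = _
    rw [complexReflection_apply, complexReflection_apply, inner_sub_right, inner_smul_right,
      ← hadef]
    match_scalars <;> ring
  have hTu : T u = (a * b - 1) • u - b • w := by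
    rw [hTapp u, hu, ← hbdef]
    match_scalars <;> ring
  have hTw : T w = a • u - w := by
    rw [hTapp w, hw, ← hadef]
    match_scalars <;> ring
  by_cases ha0 : a = 0
  · -- orthogonal case: T² = 1, so n = 2 and the inner product is 0
    have hb0 : b = 0 := by rw [hba, ha0]; simp
    have hT2 : T ^ 2 = 1 := by
      apply LinearMap.ext
      intro x
      have h1 : T x = x - ⟪u, x⟫_ℂ • u - ⟪w, x⟫_ℂ • w := by
        rw [hTapp x, ha0]; match_scalars <;> ring
      simp only [pow_succ, pow_zero, one_mul, Module.End.mul_apply, Module.End.one_apply]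
      rw [h1, hTapp]
      rw [inner_sub_right, inner_sub_right, inner_smul_right, inner_smul_right,
        inner_sub_right, inner_sub_right, inner_smul_right, inner_smul_right,
        hu, hw, ← hadef, ← hbdef, ha0, hb0]
      match_scalars <;> ring
    have hdvd : n ∣ 2 := by
      rw [← hord]; exact orderOf_dvd_of_pow_eq_one hT2
    have hn2 : n = 2 := by
      rcases hn with rfl | rfl | rfl | rfl <;> revert hdvd <;> norm_num
    subst hn2
    rw [ha0]
    norm_num [Real.cos_pi_div_two]
  · -- non-orthogonal case
    have hbne : b ≠ 0 := by
      rw [hba]; simpa using ha0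
    set r := Complex.normSq a with hrdef
    have hrpos : 0 < r := Complex.normSq_pos.mpr ha0
    have hr : a * b = ((r : ℝ) : ℂ) := by rw [hba, hrdef, Complex.mul_conj]
    have hstep : ∀ α β : ℂ, T (α • u + β • w)
        = (α * ((r : ℂ) - 1) + β * a) • u + (-(α * b) - β) • w := by
      intro α β
      rw [map_add, map_smul, map_smul, hTu, hTw]
      match_scalars
      · linear_combination α * hr
      · ring
    have e1 : T u = ((r : ℂ) - 1) • u + (b * (-1)) • w := by
      rw [hTu]
      match_scalars
      · linear_combination hr
      · ring
    have e2 : T (T u) = ((r : ℂ) ^ 2 - 3 * (r : ℂ) + 1) • u + (b * (2 - (r : ℂ))) • w := by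
      rw [e1, hstep]
      match_scalars
      · linear_combination (-1 : ℂ) * hr
      · ring
    have e3 : T (T (T u)) = ((r : ℂ) ^ 3 - 5 * (r : ℂ) ^ 2 + 6 * (r : ℂ) - 1) • u
        + (b * (-((r : ℂ) ^ 2 - 4 * (r : ℂ) + 3))) • w := by
      rw [e2, hstep]
      match_scalars
      · linear_combination (2 - (r : ℂ)) * hr
      · ring
    have e4 : T (T (T (T u))) = ((r : ℂ) ^ 4 - 7 * (r : ℂ) ^ 3 + 15 * (r : ℂ) ^ 2 - 10 * (r : ℂ) + 1) • u
        + (b * (-((r : ℂ) ^ 3 - 6 * (r : ℂ) ^ 2 + 10 * (r : ℂ) - 4))) • w := by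
      rw [e3, hstep]
      match_scalars
      · linear_combination (-((r : ℂ) ^ 2 - 4 * (r : ℂ) + 3)) * hr
      · ring
    have e6 : T (T (T (T (T (T u))))) = ((r : ℂ) ^ 6 - 11 * (r : ℂ) ^ 5 + 45 * (r : ℂ) ^ 4 - 84 * (r : ℂ) ^ 3
        + 70 * (r : ℂ) ^ 2 - 21 * (r : ℂ) + 1) • u
        + (b * (-((r : ℂ) ^ 5 - 10 * (r : ℂ) ^ 4 + 36 * (r : ℂ) ^ 3 - 56 * (r : ℂ) ^ 2 + 35 * (r : ℂ) - 6))) • w := by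
      have e5 : T (T (T (T (T u)))) = ((r : ℂ) ^ 5 - 9 * (r : ℂ) ^ 4 + 28 * (r : ℂ) ^ 3 - 35 * (r : ℂ) ^ 2
          + 15 * (r : ℂ) - 1) • u
          + (b * (-((r : ℂ) ^ 4 - 8 * (r : ℂ) ^ 3 + 21 * (r : ℂ) ^ 2 - 20 * (r : ℂ) + 5))) • w := by
        rw [e4, hstep]
        match_scalars
        · linear_combination (-((r : ℂ) ^ 3 - 6 * (r : ℂ) ^ 2 + 10 * (r : ℂ) - 4)) * hr
        · ring
      rw [e5, hstep]
      match_scalars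
      · linear_combination (-((r : ℂ) ^ 4 - 8 * (r : ℂ) ^ 3 + 21 * (r : ℂ) ^ 2 - 20 * (r : ℂ) + 5)) * hr
      · ring
    have hext : ∀ P Q : ℂ, P • u + Q • w = u → P = 1 ∧ Q = 0 := by
      intro P Q h
      have h0 : (P - 1) • u + Q • w = 0 := by
        have : (P - 1) • u + Q • w = (P • u + Q • w) - u := by module
        rw [this, h, sub_self]
      obtain ⟨h1, h2⟩ := LinearIndependent.pair_iff.mp hind _ _ h0
      exact ⟨sub_eq_zero.mp h1, h2⟩
    have hTpow : T ^ n = 1 := hord ▸ pow_orderOf_eq_one T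
    rcases hn with rfl | rfl | rfl | rfl
    · -- n = 2 : contradiction since a ≠ 0
      have h2 : T (T u) = u := by
        have h := congrArg (fun f : Module.End ℂ V => f u) hTpow
        simpa only [pow_succ, pow_zero, one_mul, Module.End.mul_apply,
          Module.End.one_apply] using h
      rw [e2] at h2
      obtain ⟨hP, hQ⟩ := hext _ _ h2
      have hQ' := (mul_eq_zero.mp hQ).resolve_left hbne
      have hr2 : r = 2 := by
        have : (r : ℂ) = 2 := by linear_combination -hQ'
        exact_mod_cast this
      have p2 : r ^ 2 - 3 * r + 1 = 1 := by exact_mod_cast hP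
      rw [hr2] at p2
      norm_num at p2
    · -- n = 3
      have h3 : T (T (T u)) = u := by
        have h := congrArg (fun f : Module.End ℂ V => f u) hTpow
        simpa only [pow_succ, pow_zero, one_mul, Module.End.mul_apply,
          Module.End.one_apply] using h
      rw [e3] at h3
      obtain ⟨hP, hQ⟩ := hext _ _ h3
      have hQ' := (mul_eq_zero.mp hQ).resolve_left hbne
      have p3 : r ^ 3 - 5 * r ^ 2 + 6 * r - 1 = 1 := by exact_mod_cast hP
      have q3 : -(r ^ 2 - 4 * r + 3) = 0 := by exact_mod_cast hQ'
      have hfac : (r - 1) * (r - 3) = 0 := by linear_combination -q3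
      rcases mul_eq_zero.mp hfac with h | h
      · have hr1 : r = 1 := by linarith
        have habs : ‖a‖ = 1 := by
          rw [Complex.norm_def, ← hrdef, hr1, Real.sqrt_one]
        rw [habs, show ((3 : ℕ) : ℝ) = 3 by norm_num, Real.cos_pi_div_three]
        norm_num
      · have hr3 : r = 3 := by linarith
        rw [hr3] at p3
        norm_num at p3
    · -- n = 4
      have h4 : T (T (T (T u))) = u := by
        have h := congrArg (fun f : Module.End ℂ V => f u) hTpow
        simpa only [pow_succ, pow_zero, one_mul, Module.End.mul_apply,
          Module.End.one_apply] using h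
      rw [e4] at h4
      obtain ⟨hP, hQ⟩ := hext _ _ h4
      have hQ' := (mul_eq_zero.mp hQ).resolve_left hbne
      have p4 : r ^ 4 - 7 * r ^ 3 + 15 * r ^ 2 - 10 * r + 1 = 1 := by exact_mod_cast hP
      have q4 : -(r ^ 3 - 6 * r ^ 2 + 10 * r - 4) = 0 := by exact_mod_cast hQ'
      have f1 : (r - 2) * (r ^ 2 - 4 * r + 2) = 0 := by linear_combination -q4
      rcases mul_eq_zero.mp f1 with h | h
      · have hr2 : r = 2 := by linarith
        have habs : ‖a‖ = Real.sqrt 2 := by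
          rw [Complex.norm_def, ← hrdef, hr2]
        rw [habs, show ((4 : ℕ) : ℝ) = 4 by norm_num, Real.cos_pi_div_four]
        ring
      · have f2 : r * (r - 2) * (3 - r) = 0 := by
          linear_combination p4 - (r * (r - 2)) * h
        rcases mul_eq_zero.mp f2 with h2 | h2
        · rcases mul_eq_zero.mp h2 with h3 | h3
          · rw [h3] at hrpos; norm_num at hrpos
          · have : r = 2 := by linarith
            rw [this] at h; norm_num at h
        · have : r = 3 := by linarith
          rw [this] at h; norm_num at h
    · -- n = 6
      have hrne1 : r ≠ 1 := by
        intro h1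
        have hab1 : a * b = 1 := by rw [hr, h1]; norm_num
        have hA1 : ∀ y : V, T y = y + (⟪w, y⟫_ℂ * a - ⟪u, y⟫_ℂ) • u + (-⟪w, y⟫_ℂ) • w := by
          intro y
          rw [hTapp y]
          match_scalars <;> ring
        have key : T ^ 3 = 1 := by
          apply LinearMap.ext
          intro x
          simp only [pow_succ, pow_zero, one_mul, Module.End.mul_apply, Module.End.one_apply]
          simp only [hA1, inner_add_right, inner_smul_right, inner_neg_right, hu, hw,
            ← hadef, ← hbdef]
          match_scalars
          · ring
          · linear_combination (⟪w, x⟫_ℂ * a ^ 2 * b - 2 * ⟪w, x⟫_ℂ * a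
              - ⟪u, x⟫_ℂ * a * b + ⟪u, x⟫_ℂ) * hab1
          · linear_combination (-(a * b * ⟪w, x⟫_ℂ) + b * ⟪u, x⟫_ℂ + ⟪w, x⟫_ℂ) * hab1
        have hdvd : (6 : ℕ) ∣ 3 := by
          rw [← hord]
          exact orderOf_dvd_of_pow_eq_one key
        norm_num at hdvd
      have h6 : T (T (T (T (T (T u))))) = u := by
        have h := congrArg (fun f : Module.End ℂ V => f u) hTpow
        simpa only [pow_succ, pow_zero, one_mul, Module.End.mul_apply,
          Module.End.one_apply] using h
      rw [e6] at h6
      obtain ⟨hP, hQ⟩ := hext _ _ h6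
      have hQ' := (mul_eq_zero.mp hQ).resolve_left hbne
      have p6 : r ^ 6 - 11 * r ^ 5 + 45 * r ^ 4 - 84 * r ^ 3 + 70 * r ^ 2 - 21 * r + 1 = 1 := by
        exact_mod_cast hP
      have q6 : -(r ^ 5 - 10 * r ^ 4 + 36 * r ^ 3 - 56 * r ^ 2 + 35 * r - 6) = 0 := by
        exact_mod_cast hQ'
      have f1 : (r - 1) * ((r - 2) * ((r - 3) * (r ^ 2 - 4 * r + 1))) = 0 := by
        linear_combination -q6
      have f2 : r * ((r - 1) * ((r - 3) * (r ^ 3 - 7 * r ^ 2 + 14 * r - 7))) = 0 := by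
        linear_combination p6
      have hr3 : r = 3 := by
        rcases mul_eq_zero.mp f1 with h | h
        · exact absurd (by linarith : r = 1) hrne1
        rcases mul_eq_zero.mp h with h2 | h2
        · have hr2 : r = 2 := by linarith
          rw [hr2] at f2; norm_num at f2
        rcases mul_eq_zero.mp h2 with h3 | h3
        · linarith
        · have f2' : r * ((r - 1) * ((r - 3) * (r - 4))) = 0 := by
            linear_combination f2 - (r * (r - 1) * (r - 3) * (r - 3)) * h3
          rcases mul_eq_zero.mp f2' with h4 | h4
          · rw [h4] at hrpos; norm_num at hrpos
          rcases mul_eq_zero.mp h4 with h5 | h5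
          · exact absurd (by linarith : r = 1) hrne1
          rcases mul_eq_zero.mp h5 with h6' | h6'
          · linarith
          · have : r = 4 := by linarith
            rw [this] at h3; norm_num at h3
      have habs : ‖a‖ = Real.sqrt 3 := by
        rw [Complex.norm_def, ← hrdef, hr3]
      rw [habs, show ((6 : ℕ) : ℝ) = 6 by norm_num, Real.cos_pi_div_six]
      ring

end PartA


lemma exists_phases {S : Type*} [Fintype S] :
    ∀ (N : ℕ) (G : SimpleGraph S), G.edgeSet.ncard ≤ N → G.IsAcyclic →
    ∀ φ : S → S → ℂ, (∀ s s', ‖φ s s'‖ = 1) →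
    (∀ s s', φ s' s = (starRingEnd ℂ) (φ s s')) →
    ∃ c : S → ℂ, (∀ s, ‖c s‖ = 1) ∧
      ∀ s s', G.Adj s s' → (starRingEnd ℂ) (c s) * c s' = φ s s' := by
  intro N
  induction N with
  | zero =>
    intro G hcard hac φ hφ1 hφ2
    have hE : G.edgeSet = ∅ := by
      rw [← Set.ncard_eq_zero (Set.toFinite _)]
      omega
    exact ⟨fun _ => 1, fun s => by simp,
      fun s s' h => absurd ((SimpleGraph.mem_edgeSet G).mpr h) (by simp [hE])⟩
  | succ N ih =>
    intro G hcard hac φ hφ1 hφ2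
    classical
    by_cases hE : G.edgeSet = ∅
    · exact ⟨fun _ => 1, fun s => by simp,
        fun s s' h => absurd ((SimpleGraph.mem_edgeSet G).mpr h) (by simp [hE])⟩
    · obtain ⟨e, he⟩ := Set.nonempty_iff_ne_empty.mpr hE
      induction e using Sym2.ind with
      | _ s₀ s₁ =>
      have hadj : G.Adj s₀ s₁ := (SimpleGraph.mem_edgeSet G).mp he
      set G' := G.deleteEdges {s(s₀, s₁)} with hG'
      have hle : G' ≤ G := SimpleGraph.deleteEdges_le _
      have hac' : G'.IsAcyclic := by
        intro v c hc
        exact hac (c.mapLe hle) (hc.mapLe hle)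
      have hcard' : G'.edgeSet.ncard ≤ N := by
        have hsub : G'.edgeSet = G.edgeSet \ {s(s₀, s₁)} :=
          SimpleGraph.edgeSet_deleteEdges _
        rw [hsub]
        have := Set.ncard_diff_singleton_lt_of_mem he (Set.toFinite _)
        omega
      obtain ⟨c', hc1, hc2⟩ := ih G' hcard' hac' φ hφ1 hφ2
      have hbr := (SimpleGraph.isAcyclic_iff_forall_adj_isBridge.mp hac) hadj
      have hnre : ¬ G'.Reachable s₀ s₁ := hbr
      have hcne : ∀ s, c' s ≠ 0 := by
        intro s h
        have := hc1 s
        rw [h] at this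
        simp at this
      set lam : ℂ := φ s₀ s₁ / ((starRingEnd ℂ) (c' s₀) * c' s₁) with hlam
      have hlamabs : ‖lam‖ = 1 := by
        rw [hlam, norm_div, norm_mul, Complex.norm_conj, hc1, hc1, hφ1]
        norm_num
      have hcl : (starRingEnd ℂ) lam * lam = 1 := by
        have h1 : lam * (starRingEnd ℂ) lam = (Complex.normSq lam : ℂ) := Complex.mul_conj lam
        rw [Complex.normSq_eq_norm_sq, hlamabs] at h1
        rw [mul_comm] at h1
        simpa using h1
      refine ⟨fun s => if G'.Reachable s₁ s then lam * c' s else c' s, fun s => ?_, ?_⟩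
      · by_cases hs : G'.Reachable s₁ s <;> simp [hs, map_mul, hlamabs, hc1]
      · intro s s' hadj2
        show (starRingEnd ℂ) (if G'.Reachable s₁ s then lam * c' s else c' s) *
          (if G'.Reachable s₁ s' then lam * c' s' else c' s') = φ s s'
        have h0 : (starRingEnd ℂ) (c' s₀) ≠ 0 := by simpa using hcne s₀
        have h1 : c' s₁ ≠ 0 := hcne s₁
        have hkey : (starRingEnd ℂ) (c' s₀) * (lam * c' s₁) = φ s₀ s₁ := by
          rw [hlam]
          field_simp
        by_cases he2 : s(s, s') = s(s₀, s₁)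
        · rcases Sym2.eq_iff.mp he2 with ⟨rfl, rfl⟩ | ⟨rfl, rfl⟩
          · rw [if_neg (fun h => hnre h.symm), if_pos (SimpleGraph.Reachable.refl _)]
            exact hkey
          · rw [if_pos (SimpleGraph.Reachable.refl _), if_neg (fun h => hnre h.symm)]
            rw [hφ2, ← hkey]
            simp only [map_mul, Complex.conj_conj]
            ring
        · have hadj' : G'.Adj s s' := by
            rw [hG', SimpleGraph.deleteEdges_adj]
            exact ⟨hadj2, by simpa using he2⟩
          have hriff : G'.Reachable s₁ s ↔ G'.Reachable s₁ s' :=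
            ⟨fun h => h.trans hadj'.reachable, fun h => h.trans hadj'.symm.reachable⟩
          by_cases hs : G'.Reachable s₁ s
          · rw [if_pos hs, if_pos (hriff.mp hs), map_mul]
            have h2 := hc2 s s' hadj'
            linear_combination ((starRingEnd ℂ) (c' s) * c' s') * hcl + h2
          · rw [if_neg hs, if_neg (fun h => hs (hriff.mpr h))]
            exact hc2 s s' hadj'

/-- Abstract form of Lemma 3.7: given a family `(v s)` of pairwise linearly independent
vectors with `⟪v s, v s⟫ = 2`, such that `σ_{v s} ∘ σ_{v s'}` has order
`m s s' ∈ {2, 3, 4, 6}` for `s ≠ s'`, and the graph with an edge `{s, s'}` exactly when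
`m s s' > 2` is a forest, the vectors can be rescaled by unit scalars `c s` so that all
pairings become the nonnegative real numbers `2 cos (π / m s s')`. -/
theorem exists_unit_rescaling_inner_eq_two_cos
    {V : Type*} [NormedAddCommGroup V] [InnerProductSpace ℂ V]
    {S : Type*} [Fintype S] (v : S → V) (m : S → S → ℕ)
    (hv : ∀ s, ⟪v s, v s⟫_ℂ = 2)
    (hind : ∀ s s', s ≠ s' → LinearIndependent ℂ ![v s, v s'])
    (hord : ∀ s s', s ≠ s' →
      orderOf (complexReflection (v s) * complexReflection (v s')) = m s s')
    (hmem : ∀ s s', s ≠ s' → m s s' ∈ ({2, 3, 4, 6} : Set ℕ))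
    (hforest : (SimpleGraph.fromRel (fun s s' => 2 < m s s')).IsAcyclic) :
    ∃ c : S → ℂ, (∀ s, ‖c s‖ = 1) ∧
      ∀ s s', s ≠ s' →
        ⟪c s • v s, c s' • v s'⟫_ℂ = 2 * Real.cos (Real.pi / m s s') := by
  classical
  set G := SimpleGraph.fromRel (fun s s' => 2 < m s s') with hGdef
  have habs : ∀ s s', s ≠ s' →
      ‖⟪v s, v s'⟫_ℂ‖ = 2 * Real.cos (Real.pi / m s s') :=
    fun s s' h => partA (hv s) (hv s') (hind s s' h) (hmem s s' h) (hord s s' h)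
  have hφ1 : ∀ s s', ‖(if ⟪v s, v s'⟫_ℂ = 0 then (1 : ℂ)
      else ((‖⟪v s, v s'⟫_ℂ‖ : ℝ) : ℂ) / ⟪v s, v s'⟫_ℂ)‖ = 1 := by
    intro s s'
    by_cases hz : ⟪v s, v s'⟫_ℂ = 0
    · rw [if_pos hz]; simp
    · rw [if_neg hz, norm_div, Complex.norm_real, Real.norm_eq_abs,
        abs_of_nonneg (norm_nonneg _), div_self (norm_ne_zero_iff.mpr hz)]
  have hφ2 : ∀ s s', (if ⟪v s', v s⟫_ℂ = 0 then (1 : ℂ)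
      else ((‖⟪v s', v s⟫_ℂ‖ : ℝ) : ℂ) / ⟪v s', v s⟫_ℂ)
      = (starRingEnd ℂ) (if ⟪v s, v s'⟫_ℂ = 0 then (1 : ℂ)
      else ((‖⟪v s, v s'⟫_ℂ‖ : ℝ) : ℂ) / ⟪v s, v s'⟫_ℂ) := by
    intro s s'
    have hcs : ⟪v s', v s⟫_ℂ = (starRingEnd ℂ) ⟪v s, v s'⟫_ℂ := (inner_conj_symm _ _).symm
    by_cases hz : ⟪v s, v s'⟫_ℂ = 0
    · rw [if_pos hz, if_pos (by rw [hcs, hz]; simp)]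
      simp
    · have hz' : ⟪v s', v s⟫_ℂ ≠ 0 := by
        intro h
        apply hz
        have h2 : (starRingEnd ℂ) ⟪v s, v s'⟫_ℂ = 0 := by rw [← hcs, h]
        exact (map_eq_zero _).mp h2
      rw [if_neg hz, if_neg hz', hcs, Complex.norm_conj, map_div₀, Complex.conj_ofReal]
  obtain ⟨c, hc1, hc2⟩ := exists_phases (G.edgeSet.ncard) G le_rfl hforest
    (fun s s' => if ⟪v s, v s'⟫_ℂ = 0 then (1 : ℂ)
      else ((‖⟪v s, v s'⟫_ℂ‖ : ℝ) : ℂ) / ⟪v s, v s'⟫_ℂ) hφ1 hφ2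
  refine ⟨c, hc1, ?_⟩
  intro s s' hne
  rw [inner_smul_left, inner_smul_right]
  have habs' := habs s s' hne
  by_cases hz : ⟪v s, v s'⟫_ℂ = 0
  · rw [hz, mul_zero, mul_zero]
    have h0 : (0 : ℝ) = 2 * Real.cos (Real.pi / m s s') := by
      rw [← habs', hz, norm_zero]
    rw [show ((2 : ℂ) * (Real.cos (Real.pi / (m s s')) : ℂ))
        = ((2 * Real.cos (Real.pi / (m s s')) : ℝ) : ℂ) by push_cast; ring, ← h0]
    simp
  · have hpos : 0 < 2 * Real.cos (Real.pi / m s s') := by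
      rw [← habs']
      exact norm_pos_iff.mpr hz
    have hm : 2 < m s s' := by
      rcases hmem s s' hne with h | h | h | h
      · exfalso
        rw [h] at hpos
        norm_num [Real.cos_pi_div_two] at hpos
      · rw [h]; norm_num
      · rw [h]; norm_num
      · rw [h]; norm_num
    have hadj : G.Adj s s' := by
      rw [hGdef]
      rw [SimpleGraph.fromRel_adj]
      exact ⟨hne, Or.inl hm⟩
    have hφ := hc2 s s' hadj
    simp only [if_neg hz] at hφ
    rw [show (starRingEnd ℂ) (c s) * (c s' * ⟪v s, v s'⟫_ℂ)
        = ((starRingEnd ℂ) (c s) * c s') * ⟪v s, v s'⟫_ℂ by ring,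
      hφ, div_mul_cancel₀ _ hz, habs']
    push_cast
    ring
end
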